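/- For all real numbers 0 < α < 1/2 and integers n ≥ 2, the sum μ = Σ_{j=0}^∞ 1/((1+j)^{2α} |z − z_j|), where z_j = 2j+1 and z lies on the boundary of the square D_n = {z : |Re z − (2n+1)| ≤ 1/2, |Im z| ≤ 1/2}, satisfies μ ≤ (M(α) + 2 log n)/n^{2α}, where M(α) = 6 + (4/3)/(1−2α) + 1/(3α). -/

import Mathlib

open Finset Real

/-- Bernoulli consequence: `(1-A)*(j+1)^(-A) ≤ (j+1)^(1-A) - j^(1-A)`. -/
lemma aux_step1 (A : ℝ) (hA0 : 0 < A) (hA1 : A < 1) (j : ℕ) :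
    (1 - A) * ((j:ℝ)+1) ^ (-A) ≤ ((j:ℝ)+1) ^ (1-A) - (j:ℝ) ^ (1-A) := by
  have hj1 : (0:ℝ) < (j:ℝ) + 1 := by positivity
  have hb : (1 + (-(1/((j:ℝ)+1)))) ^ (1-A) ≤ 1 + (1-A) * (-(1/((j:ℝ)+1))) :=
    rpow_one_add_le_one_add_mul_self (by rw [neg_le, neg_neg]; rw [div_le_one hj1]; linarith)
      (by linarith) (by linarith)
  have he : (1 + (-(1/((j:ℝ)+1)))) = (j:ℝ)/((j:ℝ)+1) := by field_simp; ring
  rw [he] at hb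
  have h2 : ((j:ℝ)/((j:ℝ)+1)) ^ (1-A) = (j:ℝ)^(1-A) / ((j:ℝ)+1)^(1-A) :=
    Real.div_rpow (by positivity) hj1.le _
  rw [h2, div_le_iff₀ (by positivity)] at hb
  have h3 : ((j:ℝ)+1)^(1-A) / ((j:ℝ)+1) = ((j:ℝ)+1)^(-A) := by
    rw [show (1-A) = 1 + (-A) by ring, Real.rpow_add hj1, Real.rpow_one]
    field_simp
  calc (1 - A) * ((j:ℝ)+1) ^ (-A) = (1-A) * (((j:ℝ)+1)^(1-A) / ((j:ℝ)+1)) := by rw [h3]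
    _ ≤ ((j:ℝ)+1)^(1-A) - (j:ℝ)^(1-A) := by
        have hb' : (↑j:ℝ) ^ (1 - A) ≤ ((j:ℝ)+1) ^ (1-A) - (1-A) * (((j:ℝ)+1)^(1-A) / ((j:ℝ)+1)) := by
          have := hb
          have hx : (1 + (1 - A) * -(1 / ((j:ℝ) + 1))) * ((j:ℝ) + 1) ^ (1 - A)
              = ((j:ℝ)+1) ^ (1-A) - (1-A) * (((j:ℝ)+1)^(1-A) / ((j:ℝ)+1)) := by ring
          linarith [hx ▸ this]
        linarith

lemma aux_psum (A : ℝ) (hA0 : 0 < A) (hA1 : A < 1) (m : ℕ) :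
    ∑ j ∈ Finset.range m, 1 / ((j:ℝ)+1) ^ A ≤ (m:ℝ) ^ (1-A) / (1-A) := by
  have h1A : (0:ℝ) < 1 - A := by linarith
  rw [le_div_iff₀ h1A, Finset.sum_mul]
  have := Finset.sum_range_sub (fun j : ℕ => (j:ℝ) ^ (1-A)) m
  calc ∑ j ∈ Finset.range m, 1 / ((j:ℝ)+1) ^ A * (1-A)
      ≤ ∑ j ∈ Finset.range m, (((j:ℝ)+1) ^ (1-A) - (j:ℝ) ^ (1-A)) := by
        apply Finset.sum_le_sum
        intro j _
        have hj1 : (0:ℝ) < (j:ℝ) + 1 := by positivity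
        have := aux_step1 A hA0 hA1 j
        rw [Real.rpow_neg hj1.le] at this
        rw [one_div, mul_comm]
        linarith
    _ = (m:ℝ) ^ (1-A) - (0:ℝ) ^ (1-A) := by
        push_cast at this
        rw [← this]
    _ ≤ (m:ℝ) ^ (1-A) := by
        rw [Real.zero_rpow (ne_of_gt h1A)]; simp

lemma aux_step2 (A : ℝ) (hA0 : 0 < A) (hA1 : A < 1) (a : ℝ) (ha : 1 ≤ a) :
    A / (a+1) ^ (1+A) ≤ 1 / a ^ A - 1 / (a+1) ^ A := by
  have ha0 : (0:ℝ) < a := by linarith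
  have ha1 : (0:ℝ) < a + 1 := by linarith
  have hb : (1 + (-(1/(a+1)))) ^ A ≤ 1 + A * (-(1/(a+1))) :=
    rpow_one_add_le_one_add_mul_self (by rw [neg_le, neg_neg, div_le_one ha1]; linarith)
      hA0.le hA1.le
  have he : (1 + (-(1/(a+1)))) = a/(a+1) := by field_simp; ring
  rw [he] at hb
  rw [Real.div_rpow ha0.le ha1.le] at hb
  rw [div_le_iff₀ (by positivity)] at hb
  have haA : (0:ℝ) < a ^ A := Real.rpow_pos_of_pos ha0 A
  have hbA : (0:ℝ) < (a+1) ^ A := Real.rpow_pos_of_pos ha1 A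
  have key : (1 + A/(a+1)) * a ^ A ≤ (a+1) ^ A := by
    have h1 : (1 + A/(a+1)) * a ^ A ≤ (1 + A/(a+1)) * ((1 + A * (-(1/(a+1)))) * (a+1)^A) := by
      apply mul_le_mul_of_nonneg_left hb (by positivity)
    have h2 : (1 + A/(a+1)) * ((1 + A * (-(1/(a+1)))) * (a+1)^A)
        = (1 - (A/(a+1))^2) * (a+1)^A := by ring
    nlinarith [sq_nonneg (A/(a+1))]
  have hpl : (a+1) ^ (1+A) = (a+1) * (a+1)^A := by
    rw [Real.rpow_add ha1, Real.rpow_one]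
  have h4 : (1 + A/(a+1)) / (a+1)^A ≤ 1 / a^A := by
    rw [div_le_div_iff₀ hbA haA]
    calc (1 + A/(a+1)) * a^A ≤ (a+1)^A := key
      _ = 1 * (a+1)^A := (one_mul _).symm
  have h5 : (1 + A/(a+1)) / (a+1)^A = 1/(a+1)^A + A/((a+1)*(a+1)^A) := by
    rw [add_div, div_div]
  rw [hpl]
  rw [h5] at h4
  linarith

lemma aux_tail (A : ℝ) (hA0 : 0 < A) (hA1 : A < 1) (N : ℕ) (hN : 1 ≤ N) (m : ℕ) :
    ∑ i ∈ Finset.range m, 1 / ((N:ℝ)+1+(i:ℝ)) ^ (1+A) ≤ 1 / (A * (N:ℝ) ^ A) := by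
  have hN1 : (1:ℝ) ≤ (N:ℝ) := by exact_mod_cast hN
  have hN0 : (0:ℝ) < (N:ℝ) := by linarith
  have htel := Finset.sum_range_sub' (fun i : ℕ => 1 / ((N:ℝ)+(i:ℝ)) ^ A) m
  push_cast at htel
  calc ∑ i ∈ Finset.range m, 1 / ((N:ℝ)+1+(i:ℝ)) ^ (1+A)
      ≤ ∑ i ∈ Finset.range m, (1/A) * (1 / ((N:ℝ)+(i:ℝ)) ^ A - 1 / ((N:ℝ)+((i:ℝ)+1)) ^ A) := by
        apply Finset.sum_le_sum
        intro i _
        have ha : (1:ℝ) ≤ (N:ℝ)+(i:ℝ) := by have : (0:ℝ) ≤ (i:ℝ) := Nat.cast_nonneg i; linarith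
        have hstep := aux_step2 A hA0 hA1 ((N:ℝ)+(i:ℝ)) ha
        rw [show ((N:ℝ)+(i:ℝ))+1 = (N:ℝ)+1+(i:ℝ) by ring] at hstep
        calc 1 / ((N:ℝ)+1+(i:ℝ)) ^ (1+A) = (1/A) * (A / ((N:ℝ)+1+(i:ℝ)) ^ (1+A)) := by
              field_simp
          _ ≤ (1/A) * (1 / ((N:ℝ)+(i:ℝ)) ^ A - 1 / ((N:ℝ)+((i:ℝ)+1)) ^ A) := by
              rw [show (N:ℝ)+((i:ℝ)+1) = (N:ℝ)+1+(i:ℝ) by ring]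
              exact mul_le_mul_of_nonneg_left hstep (by positivity)
    _ = (1/A) * (1 / ((N:ℝ)+(0:ℝ)) ^ A - 1 / ((N:ℝ)+(m:ℝ)) ^ A) := by
        rw [← Finset.mul_sum, htel]
    _ ≤ 1 / (A * (N:ℝ) ^ A) := by
        have hNA : (0:ℝ) < (N:ℝ)^A := Real.rpow_pos_of_pos hN0 A
        have h2 : (0:ℝ) ≤ 1 / ((N:ℝ)+(m:ℝ)) ^ A := by positivity
        rw [show 1/(A * (N:ℝ)^A) = (1/A) * (1/(N:ℝ)^A) by
          rw [one_div, mul_inv, one_div, one_div]]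
        rw [add_zero]
        apply mul_le_mul_of_nonneg_left _ (by positivity)
        linarith

lemma aux_harm (n : ℕ) : ∑ i ∈ Finset.range n, 1/((i:ℝ)+1) ≤ 1 + Real.log n := by
  have h := harmonic_le_one_add_log n
  have he : ((harmonic n : ℚ) : ℝ) = ∑ i ∈ Finset.range n, 1/((i:ℝ)+1) := by
    rw [harmonic]
    push_cast
    apply Finset.sum_congr rfl
    intro i _
    rw [one_div]
  rw [← he]
  exact h

set_option maxHeartbeats 2000000 in
/-- bound on μ = Σ_j 1/((1+j)^{2α} |z − z_j|) for z on ∂D_n. -/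
theorem stmt0 (α : ℝ) (hα0 : 0 < α) (hα : α < 1/2) (n : ℕ) (hn : 2 ≤ n)
    (z : ℂ)
    (hz : (|z.re - (2*(n:ℝ)+1)| = 1/2 ∧ |z.im| ≤ 1/2) ∨
          (|z.re - (2*(n:ℝ)+1)| ≤ 1/2 ∧ |z.im| = 1/2)) :
    ∑' j : ℕ, 1 / ((1 + (j:ℝ)) ^ (2*α) * ‖z - (2*(j:ℂ)+1)‖) ≤
      ((6 + (4/3)/(1-2*α) + 1/(3*α)) + 2 * Real.log n) / (n:ℝ) ^ (2*α) := by
  have hn2 : (2:ℝ) ≤ (n:ℝ) := by exact_mod_cast hn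
  have hn1 : (1:ℝ) ≤ (n:ℝ) := by linarith
  have hn0 : (0:ℝ) < (n:ℝ) := by linarith
  set A := 2*α with hAdef
  have hA0 : 0 < A := by rw [hAdef]; linarith
  have hA1 : A < 1 := by rw [hAdef]; linarith
  have h1A : 0 < 1 - A := by linarith
  have hnA : (0:ℝ) < (n:ℝ)^A := Real.rpow_pos_of_pos hn0 A
  have hlog : 0 ≤ Real.log n := Real.log_nonneg hn1
  set L := Real.log n with hLdef
  have hre : |z.re - (2*(n:ℝ)+1)| ≤ 1/2 := by
    rcases hz with ⟨h,_⟩|⟨h,_⟩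
    · exact le_of_eq h
    · exact h
  -- real part of z - z_j
  have hrepart : ∀ j : ℕ, (z - (2*(j:ℂ)+1)).re = z.re - (2*(j:ℝ)+1) := by
    intro j
    simp
  have himpart : ∀ j : ℕ, (z - (2*(j:ℂ)+1)).im = z.im := by
    intro j
    simp
  -- lower bound for j ≠ n
  have habs : ∀ j : ℕ, j ≠ n → (3/2) * |(n:ℝ) - (j:ℝ)| ≤ ‖z - (2*(j:ℂ)+1)‖ := by
    intro j hj
    have h1 : (1:ℝ) ≤ |(n:ℝ) - (j:ℝ)| := by
      have hne : (n:ℤ) - (j:ℤ) ≠ 0 := sub_ne_zero.mpr (by exact_mod_cast (Ne.symm hj))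
      have := Int.one_le_abs hne
      have hcast : |(n:ℝ) - (j:ℝ)| = ((|(n:ℤ) - (j:ℤ)| : ℤ) : ℝ) := by
        push_cast
        rw [abs_sub_comm]
      rw [hcast]
      exact_mod_cast this
    have key : 2*|(n:ℝ)-(j:ℝ)| - 1/2 ≤ |z.re - (2*(j:ℝ)+1)| := by
      have hd : 2*((n:ℝ)-(j:ℝ)) - (-(z.re - (2*(n:ℝ)+1))) = z.re - (2*(j:ℝ)+1) := by ring
      have h3 := abs_sub_abs_le_abs_sub (2*((n:ℝ)-(j:ℝ))) (-(z.re - (2*(n:ℝ)+1)))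
      rw [hd, abs_neg, abs_mul] at h3
      have : |(2:ℝ)| = 2 := by norm_num
      rw [this] at h3
      linarith
    calc (3/2) * |(n:ℝ) - (j:ℝ)| ≤ 2*|(n:ℝ)-(j:ℝ)| - 1/2 := by linarith
      _ ≤ |z.re - (2*(j:ℝ)+1)| := key
      _ = |(z - (2*(j:ℂ)+1)).re| := by rw [hrepart]
      _ ≤ ‖z - (2*(j:ℂ)+1)‖ := Complex.abs_re_le_norm _
  have habsn : (1/2:ℝ) ≤ ‖z - (2*(n:ℂ)+1)‖ := by
    rcases hz with ⟨h,_⟩|⟨_,h⟩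
    · calc (1/2:ℝ) = |z.re - (2*(n:ℝ)+1)| := h.symm
        _ = |(z - (2*(n:ℂ)+1)).re| := by rw [hrepart n]
        _ ≤ _ := Complex.abs_re_le_norm _
    · calc (1/2:ℝ) = |z.im| := h.symm
        _ = |(z - (2*(n:ℂ)+1)).im| := by rw [himpart n]
        _ ≤ _ := Complex.abs_im_le_norm _
  set f : ℕ → ℝ := fun j => 1 / ((1 + (j:ℝ)) ^ A * ‖z - (2*(j:ℂ)+1)‖) with hfdef
  have hf0 : ∀ j, 0 ≤ f j := by
    intro j
    apply div_nonneg (by norm_num)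
    apply mul_nonneg (Real.rpow_nonneg (by positivity) A) (norm_nonneg _)
  have hα3 : (0:ℝ) < 3*α := by linarith
  apply tsum_le_of_sum_le'
  · apply div_nonneg _ hnA.le
    have h2 : 0 ≤ (4/3)/(1-2*α) := by positivity
    have h3 : 0 ≤ 1/(3*α) := by positivity
    linarith
  intro s
  set K := max (s.sup id + 1) (2*n+1) with hKdef
  have hsub : s ⊆ Finset.range K := by
    intro j hj
    rw [Finset.mem_range]
    have h := Finset.le_sup (f := id) hj
    exact lt_of_lt_of_le (Nat.lt_succ_of_le h) (le_max_left _ _)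
  have hK2 : 2*n+1 ≤ K := le_max_right _ _
  have step1 : ∑ j ∈ s, f j ≤ ∑ j ∈ Finset.range K, f j :=
    Finset.sum_le_sum_of_subset_of_nonneg hsub (fun j _ _ => hf0 j)
  have hsplit : ∑ j ∈ Finset.range K, f j
      = ∑ j ∈ Finset.range (n+1), f j + (∑ j ∈ Finset.Ico (n+1) (2*n+1), f j
        + ∑ j ∈ Finset.Ico (2*n+1) K, f j) := by
    rw [Finset.range_eq_Ico,
      ← Finset.sum_Ico_consecutive f (Nat.zero_le (n+1)) (le_trans (by omega) hK2),
      ← Finset.sum_Ico_consecutive f (by omega : n+1 ≤ 2*n+1) hK2, ← Finset.range_eq_Ico]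
  have hH := aux_harm n
  -- ### Bound 1
  have hB1 : ∑ j ∈ Finset.range n, f j ≤ ((4/3)*(1/(1-A)) + (4/3)*(1+L)) / (n:ℝ)^A := by
    have hterm : ∀ j ∈ Finset.range n, f j ≤
        (4/3)*(1/(n:ℝ))*(1/(1+(j:ℝ))^A) + (4/3)*(1/(n:ℝ)^A)*(1/((n:ℝ)-(j:ℝ))) := by
      intro j hj
      rw [Finset.mem_range] at hj
      have hjn : (j:ℝ) < (n:ℝ) := by exact_mod_cast hj
      have hd0 : (0:ℝ) < (n:ℝ)-(j:ℝ) := by linarith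
      have hP0 : (0:ℝ) < (1+(j:ℝ))^A := Real.rpow_pos_of_pos (by positivity) A
      have habs' := habs j (by omega)
      rw [abs_of_pos hd0] at habs'
      have hf : f j ≤ 1/((1+(j:ℝ))^A * ((3/2)*((n:ℝ)-(j:ℝ)))) := by
        simp only [hfdef]
        exact one_div_le_one_div_of_le (by positivity)
          (mul_le_mul_of_nonneg_left habs' hP0.le)
      rcases le_or_gt ((n:ℝ)/2) ((n:ℝ)-(j:ℝ)) with hcase|hcase
      · have hbb : 1/((1+(j:ℝ))^A * ((3/2)*((n:ℝ)-(j:ℝ)))) ≤ (4/3)*(1/(n:ℝ))*(1/(1+(j:ℝ))^A) := by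
          rw [show (4/3)*(1/(n:ℝ))*(1/(1+(j:ℝ))^A) = 1/((1+(j:ℝ))^A * ((3/2)*((n:ℝ)/2))) by
            field_simp; ring]
          exact one_div_le_one_div_of_le (by positivity)
            (mul_le_mul_of_nonneg_left (by linarith) hP0.le)
        have hnn : 0 ≤ (4/3)*(1/(n:ℝ)^A)*(1/((n:ℝ)-(j:ℝ))) := by positivity
        linarith [hf.trans hbb]
      · have hj2 : (n:ℝ)/2 < 1+(j:ℝ) := by linarith
        have hPn : (n:ℝ)^A / 2 ≤ (1+(j:ℝ))^A := by
          have h1 : ((n:ℝ)/2)^A ≤ (1+(j:ℝ))^A :=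
            Real.rpow_le_rpow (by positivity) hj2.le hA0.le
          have h3 : (2:ℝ)^A ≤ 2 := by
            calc (2:ℝ)^A ≤ (2:ℝ)^(1:ℝ) :=
                  Real.rpow_le_rpow_of_exponent_le (by norm_num) (by linarith)
              _ = 2 := Real.rpow_one 2
          have h2 : (n:ℝ)^A / 2 ≤ ((n:ℝ)/2)^A := by
            rw [Real.div_rpow hn0.le (by norm_num : (0:ℝ) ≤ 2)]
            apply div_le_div_of_nonneg_left hnA.le (by positivity) h3
          linarith
        have hbb : 1/((1+(j:ℝ))^A * ((3/2)*((n:ℝ)-(j:ℝ)))) ≤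
            (4/3)*(1/(n:ℝ)^A)*(1/((n:ℝ)-(j:ℝ))) := by
          rw [show (4/3)*(1/(n:ℝ)^A)*(1/((n:ℝ)-(j:ℝ)))
              = 1/(((n:ℝ)^A/2) * ((3/2)*((n:ℝ)-(j:ℝ)))) by field_simp; ring]
          exact one_div_le_one_div_of_le (by positivity)
            (mul_le_mul_of_nonneg_right hPn (by linarith))
        have hnn : 0 ≤ (4/3)*(1/(n:ℝ))*(1/(1+(j:ℝ))^A) := by positivity
        linarith [hf.trans hbb]
    have hHrev : ∑ j ∈ Finset.range n, 1/((n:ℝ)-(j:ℝ)) = ∑ i ∈ Finset.range n, 1/((i:ℝ)+1) := by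
      rw [← Finset.sum_range_reflect (fun i : ℕ => 1/((i:ℝ)+1)) n]
      apply Finset.sum_congr rfl
      intro j hj
      rw [Finset.mem_range] at hj
      have h1 : n - 1 - j = n - (j+1) := by omega
      have h2 : j + 1 ≤ n := hj
      rw [h1, Nat.cast_sub h2]
      push_cast
      ring_nf
    have hps : ∑ j ∈ Finset.range n, 1/(1+(j:ℝ))^A ≤ (n:ℝ)^(1-A)/(1-A) := by
      have := aux_psum A hA0 hA1 n
      calc ∑ j ∈ Finset.range n, 1/(1+(j:ℝ))^A
          = ∑ j ∈ Finset.range n, 1/((j:ℝ)+1)^A := by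
            apply Finset.sum_congr rfl; intro j _; rw [add_comm]
        _ ≤ (n:ℝ)^(1-A)/(1-A) := this
    calc ∑ j ∈ Finset.range n, f j
        ≤ ∑ j ∈ Finset.range n, ((4/3)*(1/(n:ℝ))*(1/(1+(j:ℝ))^A)
          + (4/3)*(1/(n:ℝ)^A)*(1/((n:ℝ)-(j:ℝ)))) := Finset.sum_le_sum hterm
      _ = (4/3)*(1/(n:ℝ)) * (∑ j ∈ Finset.range n, 1/(1+(j:ℝ))^A)
          + (4/3)*(1/(n:ℝ)^A) * (∑ j ∈ Finset.range n, 1/((n:ℝ)-(j:ℝ))) := by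
          rw [Finset.sum_add_distrib, Finset.mul_sum, Finset.mul_sum]
      _ ≤ (4/3)*(1/(n:ℝ)) * ((n:ℝ)^(1-A)/(1-A)) + (4/3)*(1/(n:ℝ)^A) * (1+L) := by
          have h1 : (0:ℝ) ≤ (4/3)*(1/(n:ℝ)) := by positivity
          have h2 : (0:ℝ) ≤ (4/3)*(1/(n:ℝ)^A) := by positivity
          rw [hHrev]
          have := mul_le_mul_of_nonneg_left hps h1
          have := mul_le_mul_of_nonneg_left (hH.trans_eq rfl) h2
          rw [hLdef]
          linarith [mul_le_mul_of_nonneg_left hps h1,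
            mul_le_mul_of_nonneg_left hH h2]
      _ = ((4/3)*(1/(1-A)) + (4/3)*(1+L)) / (n:ℝ)^A := by
          rw [Real.rpow_sub hn0, Real.rpow_one]
          field_simp
  -- ### Bound 2
  have hB2 : f n ≤ 2 / (n:ℝ)^A := by
    have hP : (n:ℝ)^A ≤ (1+(n:ℝ))^A := Real.rpow_le_rpow hn0.le (by linarith) hA0.le
    calc f n ≤ 1/((n:ℝ)^A * (1/2)) := by
          simp only [hfdef]
          exact one_div_le_one_div_of_le (by positivity)
            (mul_le_mul hP habsn (by norm_num) (Real.rpow_nonneg (by positivity) A))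
      _ = 2/(n:ℝ)^A := by field_simp
  -- ### Bound 3
  have hB3 : ∑ j ∈ Finset.Ico (n+1) (2*n+1), f j ≤ ((2/3)*(1+L)) / (n:ℝ)^A := by
    rw [Finset.sum_Ico_eq_sum_range, show 2*n+1 - (n+1) = n from by omega]
    calc ∑ i ∈ Finset.range n, f (n+1+i)
        ≤ ∑ i ∈ Finset.range n, (2/3)*(1/(n:ℝ)^A)*(1/((i:ℝ)+1)) := by
          apply Finset.sum_le_sum
          intro i _
          have he : |(n:ℝ) - ((n+1+i:ℕ):ℝ)| = (i:ℝ)+1 := by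
            push_cast
            rw [show (n:ℝ) - ((n:ℝ)+1+(i:ℝ)) = -(1+(i:ℝ)) by ring, abs_neg,
              abs_of_nonneg (by positivity)]
            ring
          have habs' := habs (n+1+i) (by omega)
          rw [he] at habs'
          have h1 : (n:ℝ)^A ≤ (1 + ((n+1+i:ℕ):ℝ))^A :=
            Real.rpow_le_rpow hn0.le (by push_cast; linarith [Nat.cast_nonneg (α := ℝ) i]) hA0.le
          calc f (n+1+i) ≤ 1/((n:ℝ)^A * ((3/2)*((i:ℝ)+1))) := by
                simp only [hfdef]
                exact one_div_le_one_div_of_le (by positivity)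
                  (mul_le_mul h1 habs' (by positivity) (Real.rpow_nonneg (by positivity) A))
            _ = (2/3)*(1/(n:ℝ)^A)*(1/((i:ℝ)+1)) := by
                field_simp
      _ = (2/3)*(1/(n:ℝ)^A) * ∑ i ∈ Finset.range n, 1/((i:ℝ)+1) := by rw [Finset.mul_sum]
      _ ≤ (2/3)*(1/(n:ℝ)^A)*(1+L) := by
          apply mul_le_mul_of_nonneg_left _ (by positivity)
          rw [hLdef]; exact hH
      _ = ((2/3)*(1+L))/(n:ℝ)^A := by ring
  -- ### Bound 4
  have hB4 : ∑ j ∈ Finset.Ico (2*n+1) K, f j ≤ ((2/3)*(1/A)) / (n:ℝ)^A := by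
    rw [Finset.sum_Ico_eq_sum_range]
    calc ∑ i ∈ Finset.range (K - (2*n+1)), f (2*n+1+i)
        ≤ ∑ i ∈ Finset.range (K - (2*n+1)), (2/3) * (1/((n:ℝ)+1+(i:ℝ))^(1+A)) := by
          apply Finset.sum_le_sum
          intro i _
          have hx0 : (0:ℝ) < (n:ℝ)+1+(i:ℝ) := by positivity
          have he : |(n:ℝ) - ((2*n+1+i:ℕ):ℝ)| = (n:ℝ)+1+(i:ℝ) := by
            push_cast
            rw [show (n:ℝ) - (2*(n:ℝ)+1+(i:ℝ)) = -((n:ℝ)+1+(i:ℝ)) by ring, abs_neg,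
              abs_of_nonneg (by positivity)]
          have habs' := habs (2*n+1+i) (by omega)
          rw [he] at habs'
          have h1 : ((n:ℝ)+1+(i:ℝ))^A ≤ (1 + ((2*n+1+i:ℕ):ℝ))^A :=
            Real.rpow_le_rpow hx0.le (by push_cast; linarith) hA0.le
          calc f (2*n+1+i) ≤ 1/(((n:ℝ)+1+(i:ℝ))^A * ((3/2)*((n:ℝ)+1+(i:ℝ)))) := by
                simp only [hfdef]
                exact one_div_le_one_div_of_le (by positivity)
                  (mul_le_mul h1 habs' (by positivity) (Real.rpow_nonneg (by positivity) A))
            _ = (2/3) * (1/((n:ℝ)+1+(i:ℝ))^(1+A)) := by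
                rw [Real.rpow_add hx0, Real.rpow_one]
                have hxA : (0:ℝ) < ((n:ℝ)+1+(i:ℝ))^A := Real.rpow_pos_of_pos hx0 A
                field_simp
      _ = (2/3) * ∑ i ∈ Finset.range (K - (2*n+1)), 1/((n:ℝ)+1+(i:ℝ))^(1+A) := by
          rw [Finset.mul_sum]
      _ ≤ (2/3) * (1/(A*(n:ℝ)^A)) := by
          apply mul_le_mul_of_nonneg_left _ (by norm_num)
          exact aux_tail A hA0 hA1 n (by omega) _
      _ = ((2/3)*(1/A))/(n:ℝ)^A := by
          rw [one_div (A*(n:ℝ)^A), mul_inv]; ring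
  -- ### assemble
  have hsum_succ : ∑ j ∈ Finset.range (n+1), f j = ∑ j ∈ Finset.range n, f j + f n :=
    Finset.sum_range_succ f n
  have hcomb : (((4/3)*(1/(1-A)) + (4/3)*(1+L)) + 2 + ((2/3)*(1+L)) + ((2/3)*(1/A))) / (n:ℝ)^A
      = ((4/3)*(1/(1-A)) + (4/3)*(1+L)) / (n:ℝ)^A + 2/(n:ℝ)^A + ((2/3)*(1+L))/(n:ℝ)^A
        + ((2/3)*(1/A))/(n:ℝ)^A := by ring
  have heq : (2/3)*(1/A) = 1/(3*α) := by
    rw [hAdef]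
    field_simp
  calc ∑ j ∈ s, f j ≤ ∑ j ∈ Finset.range K, f j := step1
    _ = ∑ j ∈ Finset.range (n+1), f j + (∑ j ∈ Finset.Ico (n+1) (2*n+1), f j
        + ∑ j ∈ Finset.Ico (2*n+1) K, f j) := hsplit
    _ ≤ (((4/3)*(1/(1-A)) + (4/3)*(1+L)) + 2 + ((2/3)*(1+L)) + ((2/3)*(1/A))) / (n:ℝ)^A := by
        rw [hcomb, hsum_succ]
        linarith [hB1, hB2, hB3, hB4]
    _ ≤ ((6 + (4/3)/(1-A) + 1/(3*α)) + 2 * L) / (n:ℝ)^A := by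
        gcongr ?_ / _
        rw [heq]
        have h1 : (4/3)*(1/(1-A)) = (4/3)/(1-A) := by ring
        linarith
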